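/- Assume 0 < Re b₁, 0 < Re(c₁ − b₁), 0 < Re b₂ and 0 < Re(c₂ − b₂). Define G₂(X,Y) = Σ_{m,n≥0} (a)_{m+n} (−1)^{(m+n)k} (−t)_{(m+n)k} X^m Y^n / (m! n!) (a finite sum). Then 𝓕₂⁽²⁾(a,b₁,b₂;c₁,c₂;t,k,x,y) = [Γ(c₁)Γ(c₂)/(Γ(b₁)Γ(b₂)Γ(c₁−b₁)Γ(c₂−b₂))] · ∫₀¹∫₀¹ u^{b₁−1}(1−u)^{c₁−b₁−1} v^{b₂−1}(1−v)^{c₂−b₂−1} G₂(u·x, v·y) du dv, where the complex powers of u, 1−u, v, 1−v are defined via the real logarithm on (0,1). -/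

import Mathlib

open Complex Finset

/-- Ascending Pochhammer symbol `(z)_j = z (z+1) ⋯ (z+j−1)`, with `(z)_0 = 1`. -/
noncomputable def poch (z : ℂ) (j : ℕ) : ℂ := (ascPochhammer ℂ j).eval z

/-- The second discrete Appell function `𝓕₂⁽²⁾(a,b₁,b₂;c₁,c₂;t,k,x,y)`.
Since `(−t)_{(m+n)k} = 0` once `(m+n)k > t` (for `k ≥ 1`), the doubly infinite sum
reduces to this finite sum. -/
noncomputable def F2two (a b₁ b₂ c₁ c₂ : ℂ) (t k : ℕ) (x y : ℂ) : ℂ :=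
  ∑ m ∈ Finset.range (t + 1), ∑ n ∈ Finset.range (t + 1),
    poch a (m + n) * poch b₁ m * poch b₂ n * (-1 : ℂ) ^ ((m + n) * k)
      * poch (-(t : ℂ)) ((m + n) * k) * x ^ m * y ^ n
    / (poch c₁ m * poch c₂ n * (Nat.factorial m : ℂ) * (Nat.factorial n : ℂ))

section Helpers
open MeasureTheory intervalIntegral

lemma intervalIntegrable_sum' {ι : Type*} {s : Finset ι} {f : ι → ℝ → ℂ} {a b : ℝ}
    (h : ∀ i ∈ s, IntervalIntegrable (f i) MeasureTheory.volume a b) :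
    IntervalIntegrable (fun v => ∑ i ∈ s, f i v) MeasureTheory.volume a b := by
  have h2 := IntervalIntegrable.sum s h
  have : (∑ i ∈ s, f i) = fun v => ∑ i ∈ s, f i v := by funext v; simp
  rwa [this] at h2

lemma poch_succ (z : ℂ) (m : ℕ) : poch z (m+1) = poch z m * (z + m) := by
  simp [poch, ascPochhammer_succ_right]

lemma poch_ne_zero {z : ℂ} (h : ∀ i : ℕ, z + i ≠ 0) (m : ℕ) : poch z m ≠ 0 := by
  induction m with
  | zero => simp [poch]
  | succ n ih => rw [poch_succ]; exact mul_ne_zero ih (h n)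

lemma Gamma_poch {z : ℂ} (h : ∀ i : ℕ, z + i ≠ 0) (m : ℕ) :
    Complex.Gamma (z + m) = Complex.Gamma z * poch z m := by
  induction m with
  | zero => simp [poch]
  | succ n ih =>
      have : z + (n+1 : ℕ) = (z + n) + 1 := by push_cast; ring
      rw [this, Complex.Gamma_add_one _ (h n), ih, poch_succ]; ring

lemma beta_pow_eqOn {b d : ℂ} (n : ℕ) :
    Set.EqOn (fun v : ℝ => (v:ℂ)^(b-1) * (1-(v:ℂ))^(d-1) * (v:ℂ)^n)
      (fun v : ℝ => (v:ℂ)^(b + n - 1) * (1-(v:ℂ))^(d-1)) (Set.Ioc 0 1) := by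
  intro v hv
  have hv0 : (v:ℂ) ≠ 0 := by exact_mod_cast ne_of_gt hv.1
  have : (v:ℂ)^(b + n - 1) = (v:ℂ)^(b-1) * (v:ℂ)^n := by
    rw [show b + n - 1 = (b-1) + n by ring, Complex.cpow_add _ _ hv0, Complex.cpow_natCast]
  simp only [this]; ring

lemma beta_pow_integrable {b d : ℂ} (hb : 0 < b.re) (hd : 0 < d.re) (n : ℕ) :
    IntervalIntegrable (fun v : ℝ => (v:ℂ)^(b-1) * (1-(v:ℂ))^(d-1) * (v:ℂ)^n)
      MeasureTheory.volume 0 1 := by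
  have hb' : 0 < (b + n).re := by simp [Complex.add_re]; positivity
  have := Complex.betaIntegral_convergent hb' hd
  rw [intervalIntegrable_iff_integrableOn_Ioc_of_le (by norm_num)] at this ⊢
  exact this.congr_fun (beta_pow_eqOn n).symm measurableSet_Ioc

lemma beta_pow_integral {b d : ℂ} (hb : 0 < b.re) (hd : 0 < d.re) (n : ℕ) :
    (∫ v in (0:ℝ)..1, (v:ℂ)^(b-1) * (1-(v:ℂ))^(d-1) * (v:ℂ)^n)
      = Complex.betaIntegral (b + n) d := by
  rw [Complex.betaIntegral]
  refine intervalIntegral.integral_congr_ae (Filter.Eventually.of_forall fun v hv => ?_)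
  rw [Set.uIoc_of_le (by norm_num : (0:ℝ) ≤ 1)] at hv
  exact beta_pow_eqOn n hv

lemma beta_val {b c : ℂ} (hb : 0 < b.re) (hcb : 0 < (c - b).re)
    (hc : ∀ i : ℕ, c + i ≠ 0) (hbz : ∀ i : ℕ, b + i ≠ 0) (m : ℕ) :
    Complex.betaIntegral (b + m) (c - b) =
      Complex.Gamma b * poch b m * Complex.Gamma (c - b) / (Complex.Gamma c * poch c m) := by
  have hb' : 0 < (b + m).re := by simp [Complex.add_re]; positivity
  have key := Complex.Gamma_mul_Gamma_eq_betaIntegral hb' hcb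
  have hsum : b + m + (c - b) = c + m := by ring
  rw [hsum, Gamma_poch hbz, Gamma_poch hc] at key
  have hne : Complex.Gamma c * poch c m ≠ 0 := by
    refine mul_ne_zero (Complex.Gamma_ne_zero fun i => ?_) (poch_ne_zero hc m)
    intro h; exact hc i (by rw [h]; ring)
  rw [eq_div_iff hne]
  linear_combination -key


end Helpers

/-- Euler-type double integral representation of `𝓕₂⁽²⁾`. -/
theorem integral_representation_euler_two (a b₁ b₂ c₁ c₂ x y : ℂ) (k : ℕ) (hk : 0 < k)
    (hc₁ : ∀ n : ℕ, c₁ ≠ -(n : ℂ)) (hc₂ : ∀ n : ℕ, c₂ ≠ -(n : ℂ))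
    (t : ℕ)
    (hb₁ : 0 < b₁.re) (hc₁b₁ : 0 < (c₁ - b₁).re) (hb₂ : 0 < b₂.re) (hc₂b₂ : 0 < (c₂ - b₂).re)
    (G₂ : ℂ → ℂ → ℂ)
    (hG₂ : ∀ X Y : ℂ, G₂ X Y =
      ∑ m ∈ Finset.range (t + 1), ∑ n ∈ Finset.range (t + 1),
        poch a (m + n) * (-1 : ℂ) ^ ((m + n) * k) * poch (-(t : ℂ)) ((m + n) * k)
          * X ^ m * Y ^ n / ((Nat.factorial m : ℂ) * (Nat.factorial n : ℂ))) :
    F2two a b₁ b₂ c₁ c₂ t k x y =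
      Complex.Gamma c₁ * Complex.Gamma c₂ /
          (Complex.Gamma b₁ * Complex.Gamma b₂ * Complex.Gamma (c₁ - b₁) *
            Complex.Gamma (c₂ - b₂)) *
        ∫ u in (0 : ℝ)..1, ∫ v in (0 : ℝ)..1,
          (u : ℂ) ^ (b₁ - 1) * ((1 : ℂ) - (u : ℂ)) ^ (c₁ - b₁ - 1) *
            (v : ℂ) ^ (b₂ - 1) * ((1 : ℂ) - (v : ℂ)) ^ (c₂ - b₂ - 1) *
            G₂ ((u : ℂ) * x) ((v : ℂ) * y) := by
  have hb₁z : ∀ i : ℕ, b₁ + i ≠ 0 := by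
    intro i h
    have := congrArg Complex.re h
    simp [Complex.add_re] at this
    have h2 : (0:ℝ) ≤ (i:ℝ) := Nat.cast_nonneg i
    linarith
  have hb₂z : ∀ i : ℕ, b₂ + i ≠ 0 := by
    intro i h
    have := congrArg Complex.re h
    simp [Complex.add_re] at this
    have h2 : (0:ℝ) ≤ (i:ℝ) := Nat.cast_nonneg i
    linarith
  have hc₁z : ∀ i : ℕ, c₁ + i ≠ 0 := fun i h => hc₁ i (eq_neg_of_add_eq_zero_left h)
  have hc₂z : ∀ i : ℕ, c₂ + i ≠ 0 := fun i h => hc₂ i (eq_neg_of_add_eq_zero_left h)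
  set P : ℕ → ℕ → ℂ := fun m n =>
    poch a (m + n) * (-1 : ℂ) ^ ((m + n) * k) * poch (-(t : ℂ)) ((m + n) * k) with hP
  set B₂ : ℕ → ℂ := fun n => Complex.betaIntegral (b₂ + n) (c₂ - b₂) with hB₂
  set B₁ : ℕ → ℂ := fun m => Complex.betaIntegral (b₁ + m) (c₁ - b₁) with hB₁
  -- inner integral
  have inner : ∀ u : ℝ,
      (∫ v in (0:ℝ)..1, (u : ℂ) ^ (b₁ - 1) * ((1 : ℂ) - (u : ℂ)) ^ (c₁ - b₁ - 1) *
            (v : ℂ) ^ (b₂ - 1) * ((1 : ℂ) - (v : ℂ)) ^ (c₂ - b₂ - 1) *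
            G₂ ((u : ℂ) * x) ((v : ℂ) * y))
      = ∑ m ∈ Finset.range (t + 1), ∑ n ∈ Finset.range (t + 1),
          (P m n * ((u:ℂ) * x) ^ m * y ^ n /
              ((Nat.factorial m : ℂ) * (Nat.factorial n : ℂ)) *
            ((u : ℂ) ^ (b₁ - 1) * ((1 : ℂ) - (u : ℂ)) ^ (c₁ - b₁ - 1))) * B₂ n := by
    intro u
    have hpt : ∀ v : ℝ,
        (u : ℂ) ^ (b₁ - 1) * ((1 : ℂ) - (u : ℂ)) ^ (c₁ - b₁ - 1) *
            (v : ℂ) ^ (b₂ - 1) * ((1 : ℂ) - (v : ℂ)) ^ (c₂ - b₂ - 1) *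
            G₂ ((u : ℂ) * x) ((v : ℂ) * y)
        = ∑ m ∈ Finset.range (t + 1), ∑ n ∈ Finset.range (t + 1),
            (P m n * ((u:ℂ) * x) ^ m * y ^ n /
                ((Nat.factorial m : ℂ) * (Nat.factorial n : ℂ)) *
              ((u : ℂ) ^ (b₁ - 1) * ((1 : ℂ) - (u : ℂ)) ^ (c₁ - b₁ - 1))) *
            ((v : ℂ) ^ (b₂ - 1) * ((1 : ℂ) - (v : ℂ)) ^ (c₂ - b₂ - 1) * (v:ℂ) ^ n) := by
      intro v
      rw [hG₂]
      simp only [Finset.mul_sum]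
      refine Finset.sum_congr rfl fun m _ => Finset.sum_congr rfl fun n _ => ?_
      simp only [hP]
      ring
    rw [intervalIntegral.integral_congr (fun v _ => hpt v)]
    rw [intervalIntegral.integral_finset_sum (f := fun m (v : ℝ) =>
        ∑ n ∈ Finset.range (t + 1),
          (P m n * ((u:ℂ) * x) ^ m * y ^ n /
              ((Nat.factorial m : ℂ) * (Nat.factorial n : ℂ)) *
            ((u : ℂ) ^ (b₁ - 1) * ((1 : ℂ) - (u : ℂ)) ^ (c₁ - b₁ - 1))) *
          ((v : ℂ) ^ (b₂ - 1) * ((1 : ℂ) - (v : ℂ)) ^ (c₂ - b₂ - 1) * (v:ℂ) ^ n))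
      (fun m _ => intervalIntegrable_sum'
        (fun n _ => ((beta_pow_integrable hb₂ hc₂b₂ n).const_mul _)))]
    refine Finset.sum_congr rfl fun m _ => ?_
    rw [intervalIntegral.integral_finset_sum
      (fun n _ => ((beta_pow_integrable hb₂ hc₂b₂ n).const_mul _))]
    refine Finset.sum_congr rfl fun n _ => ?_
    rw [intervalIntegral.integral_const_mul, beta_pow_integral hb₂ hc₂b₂ n]
  -- outer integral
  have outer :
      (∫ u in (0:ℝ)..1, ∫ v in (0 : ℝ)..1,
          (u : ℂ) ^ (b₁ - 1) * ((1 : ℂ) - (u : ℂ)) ^ (c₁ - b₁ - 1) *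
            (v : ℂ) ^ (b₂ - 1) * ((1 : ℂ) - (v : ℂ)) ^ (c₂ - b₂ - 1) *
            G₂ ((u : ℂ) * x) ((v : ℂ) * y))
      = ∑ m ∈ Finset.range (t + 1), ∑ n ∈ Finset.range (t + 1),
          (P m n * x ^ m * y ^ n /
              ((Nat.factorial m : ℂ) * (Nat.factorial n : ℂ)) * B₂ n) * B₁ m := by
    have hpt : ∀ u : ℝ,
        (∫ v in (0 : ℝ)..1,
          (u : ℂ) ^ (b₁ - 1) * ((1 : ℂ) - (u : ℂ)) ^ (c₁ - b₁ - 1) *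
            (v : ℂ) ^ (b₂ - 1) * ((1 : ℂ) - (v : ℂ)) ^ (c₂ - b₂ - 1) *
            G₂ ((u : ℂ) * x) ((v : ℂ) * y))
        = ∑ m ∈ Finset.range (t + 1), ∑ n ∈ Finset.range (t + 1),
            (P m n * x ^ m * y ^ n /
                ((Nat.factorial m : ℂ) * (Nat.factorial n : ℂ)) * B₂ n) *
              ((u : ℂ) ^ (b₁ - 1) * ((1 : ℂ) - (u : ℂ)) ^ (c₁ - b₁ - 1) * (u:ℂ) ^ m) := by
      intro u
      rw [inner u]
      refine Finset.sum_congr rfl fun m _ => Finset.sum_congr rfl fun n _ => ?_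
      ring
    rw [intervalIntegral.integral_congr (fun u _ => hpt u)]
    rw [intervalIntegral.integral_finset_sum (f := fun m (u : ℝ) =>
        ∑ n ∈ Finset.range (t + 1),
          (P m n * x ^ m * y ^ n /
              ((Nat.factorial m : ℂ) * (Nat.factorial n : ℂ)) * B₂ n) *
            ((u : ℂ) ^ (b₁ - 1) * ((1 : ℂ) - (u : ℂ)) ^ (c₁ - b₁ - 1) * (u:ℂ) ^ m))
      (fun m _ => intervalIntegrable_sum'
        (fun n _ => ((beta_pow_integrable hb₁ hc₁b₁ m).const_mul _)))]
    refine Finset.sum_congr rfl fun m _ => ?_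
    rw [intervalIntegral.integral_finset_sum
      (fun n _ => ((beta_pow_integrable hb₁ hc₁b₁ m).const_mul _))]
    refine Finset.sum_congr rfl fun n _ => ?_
    rw [intervalIntegral.integral_const_mul, beta_pow_integral hb₁ hc₁b₁ m]
  rw [outer, F2two, Finset.mul_sum]
  refine Finset.sum_congr rfl fun m _ => ?_
  rw [Finset.mul_sum]
  refine Finset.sum_congr rfl fun n _ => ?_
  rw [hB₁, hB₂]
  simp only
  rw [beta_val hb₁ hc₁b₁ hc₁z hb₁z m, beta_val hb₂ hc₂b₂ hc₂z hb₂z n, hP]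
  have hG : Complex.Gamma b₁ ≠ 0 := Complex.Gamma_ne_zero_of_re_pos hb₁
  have hG2 : Complex.Gamma b₂ ≠ 0 := Complex.Gamma_ne_zero_of_re_pos hb₂
  have hG3 : Complex.Gamma (c₁ - b₁) ≠ 0 := Complex.Gamma_ne_zero_of_re_pos hc₁b₁
  have hG4 : Complex.Gamma (c₂ - b₂) ≠ 0 := Complex.Gamma_ne_zero_of_re_pos hc₂b₂
  have hG5 : Complex.Gamma c₁ ≠ 0 := Complex.Gamma_ne_zero fun i h => hc₁ i h
  have hG6 : Complex.Gamma c₂ ≠ 0 := Complex.Gamma_ne_zero fun i h => hc₂ i h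
  have hp1 : poch c₁ m ≠ 0 := poch_ne_zero hc₁z m
  have hp2 : poch c₂ n ≠ 0 := poch_ne_zero hc₂z n
  have hf1 : (Nat.factorial m : ℂ) ≠ 0 := Nat.cast_ne_zero.2 (Nat.factorial_ne_zero m)
  have hf2 : (Nat.factorial n : ℂ) ≠ 0 := Nat.cast_ne_zero.2 (Nat.factorial_ne_zero n)
  have hprod : (Complex.Gamma c₁ * Complex.Gamma c₂ * Complex.Gamma b₂ *
        Complex.Gamma (c₂ - b₂) * Complex.Gamma b₁ * Complex.Gamma (c₁ - b₁) *
        poch c₁ m * poch c₂ n * (Nat.factorial m : ℂ) * (Nat.factorial n : ℂ)) *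
      ((Complex.Gamma c₁)⁻¹ * (Complex.Gamma c₂)⁻¹ * (Complex.Gamma b₂)⁻¹ *
        (Complex.Gamma (c₂ - b₂))⁻¹ * (Complex.Gamma b₁)⁻¹ * (Complex.Gamma (c₁ - b₁))⁻¹ *
        (poch c₁ m)⁻¹ * (poch c₂ n)⁻¹ * ((Nat.factorial m : ℂ))⁻¹ *
        ((Nat.factorial n : ℂ))⁻¹) = 1 := by
    have hne : Complex.Gamma c₁ * Complex.Gamma c₂ * Complex.Gamma b₂ *
        Complex.Gamma (c₂ - b₂) * Complex.Gamma b₁ * Complex.Gamma (c₁ - b₁) *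
        poch c₁ m * poch c₂ n * (Nat.factorial m : ℂ) * (Nat.factorial n : ℂ) ≠ 0 := by
      repeat' apply mul_ne_zero
      all_goals assumption
    field_simp
  field_simp [hG, hG2, hG3, hG4, hG5, hG6, hp1, hp2, hf1, hf2]
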